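/- Let k ∈ ℝ, M ∈ ℝ with M ≠ 0, ω ∈ ℂ, let v₀ : ℝ → ℝ be differentiable, and let u, w, p : ℝ → ℂ with w and p differentiable satisfy for all z: (1) i·ω·u(z) = i·k·v₀(z)·u(z) + v₀'(z)·w(z) + i·k·p(z); (2) i·ω·w(z) = i·k·v₀(z)·w(z) + p'(z); (3) i·ω·p(z) = (i·k/M²)·u(z) + (1/M²)·w'(z) + i·k·v₀(z)·p(z). Then the PT-transformed triple ũ(z) = conj(u(z)), w̃(z) = −conj(w(z)), p̃(z) = conj(p(z)) satisfies the same three equations with ω replaced by conj(ω). -/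

import Mathlib

/-- PT symmetry of the full Kelvin–Helmholtz eigenvalue problem (Eq. (5) of the paper):
if `(u, w, p)` solves the linearized shear-layer equations with eigenfrequency `ω`, then
the PT-transformed triple `(conj u, −conj w, conj p)` solves them with eigenfrequency
`conj ω`; eigenmodes come in pairs with conjugate eigenfrequencies. -/
theorem stmt_16 (k M : ℝ) (hM : M ≠ 0) (ω : ℂ)
    (v₀ : ℝ → ℝ) (hv₀ : Differentiable ℝ v₀)
    (u w p : ℝ → ℂ) (hw : Differentiable ℝ w) (hp : Differentiable ℝ p)
    (h1 : ∀ z, Complex.I * ω * u z =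
      Complex.I * k * (v₀ z) * u z + ((deriv v₀ z : ℝ) : ℂ) * w z + Complex.I * k * p z)
    (h2 : ∀ z, Complex.I * ω * w z =
      Complex.I * k * (v₀ z) * w z + deriv p z)
    (h3 : ∀ z, Complex.I * ω * p z =
      Complex.I * k / (M ^ 2 : ℂ) * u z + (1 / (M ^ 2 : ℂ)) * deriv w z +
        Complex.I * k * (v₀ z) * p z) :
    (∀ z, Complex.I * (starRingEnd ℂ) ω * (starRingEnd ℂ) (u z) =
      Complex.I * k * (v₀ z) * (starRingEnd ℂ) (u z) +
        ((deriv v₀ z : ℝ) : ℂ) * (-(starRingEnd ℂ) (w z)) +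
        Complex.I * k * (starRingEnd ℂ) (p z)) ∧
    (∀ z, Complex.I * (starRingEnd ℂ) ω * (-(starRingEnd ℂ) (w z)) =
      Complex.I * k * (v₀ z) * (-(starRingEnd ℂ) (w z)) +
        deriv (fun t => (starRingEnd ℂ) (p t)) z) ∧
    (∀ z, Complex.I * (starRingEnd ℂ) ω * (starRingEnd ℂ) (p z) =
      Complex.I * k / (M ^ 2 : ℂ) * (starRingEnd ℂ) (u z) +
        (1 / (M ^ 2 : ℂ)) * deriv (fun t => -(starRingEnd ℂ) (w t)) z +
        Complex.I * k * (v₀ z) * (starRingEnd ℂ) (p z)) := by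
  have hder : ∀ (f : ℝ → ℂ), Differentiable ℝ f → ∀ z,
      deriv (fun t => (starRingEnd ℂ) (f t)) z = (starRingEnd ℂ) (deriv f z) := by
    intro f hf z
    have := (Complex.conjCLE.hasFDerivAt.comp_hasDerivAt z (hf z).hasDerivAt)
    simpa [Function.comp_def, Complex.conjCAE_apply] using this.deriv
  refine ⟨fun z => ?_, fun z => ?_, fun z => ?_⟩
  · have := congrArg (starRingEnd ℂ) (h1 z)
    simp only [map_add, map_mul, Complex.conj_I, Complex.conj_ofReal] at this
    ring_nf
    ring_nf at this
    linear_combination -this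
  · have := congrArg (starRingEnd ℂ) (h2 z)
    simp only [map_add, map_mul, Complex.conj_I, Complex.conj_ofReal] at this
    rw [hder p hp z]
    ring_nf
    ring_nf at this
    linear_combination this
  · have := congrArg (starRingEnd ℂ) (h3 z)
    simp only [map_add, map_mul, map_div₀, map_one, Complex.conj_I, Complex.conj_ofReal,
      map_pow] at this
    have h4 : deriv (fun t => -(starRingEnd ℂ) (w t)) z = -(starRingEnd ℂ) (deriv w z) := by
      rw [deriv.fun_neg, hder w hw z]
    rw [h4]
    ring_nf
    ring_nf at this
    linear_combination -this
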